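/- Let Q be a prime power, d a positive integer, and β a (Q+1)-th root of unity in F_{Q^2}. Then β·x^(1+d(Q−1)) is a complete permutation polynomial over F_{Q^2} if and only if (1) gcd((d−1)(2d−1), Q+1) = 1 and (2) (−β)^((Q+1)/gcd(Q+1, d)) ≠ 1. -/

import Mathlib

section CPP
variable {F : Type*} [Field F] [Fintype F]

private lemma cpp_zpow {G : Type*} [Group G] {ζ : G} {N : ℕ} (hord : orderOf ζ = N) (k : ℤ) :
    ζ ^ k = 1 ↔ (N : ℤ) ∣ k := by
  subst hord; exact orderOf_dvd_iff_zpow_eq_one.symm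

private lemma cpp_frob {Q : ℕ} (hF : Fintype.card F = Q ^ 2) :
    ∀ a b : F, (a + b) ^ Q = a ^ Q + b ^ Q := by
  have hp := CharP.char_is_prime F (ringChar F)
  haveI : Fact (Nat.Prime (ringChar F)) := ⟨hp⟩
  obtain ⟨n, -, hcard⟩ := FiniteField.card F (ringChar F)
  have hQdvd : Q ∣ (ringChar F) ^ (n : ℕ) := by
    rw [← hcard, hF]; exact dvd_pow_self Q two_ne_zero
  obtain ⟨t, -, hQt⟩ := (Nat.dvd_prime_pow hp).mp hQdvd
  intro a b
  rw [hQt]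
  exact add_pow_char_pow a b _ t

omit [Fintype F] in
private lemma cpp_key {Q : ℕ} (hfrob : ∀ a b : F, (a + b) ^ Q = a ^ Q + b ^ Q)
    {β t : F} (hβ : β ^ (Q + 1) = 1) (ht : t ^ (Q + 1) = 1) :
    (β * t + 1) ^ Q = β⁻¹ * t⁻¹ * (β * t + 1) := by
  have hβ0 : β ≠ 0 := by rintro rfl; simp at hβ
  have ht0 : t ≠ 0 := by rintro rfl; simp at ht
  have hβq : β ^ Q = β⁻¹ := by
    field_simp
    rw [← pow_succ]; exact hβ
  have htq : t ^ Q = t⁻¹ := by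
    field_simp
    rw [← pow_succ]; exact ht
  have h1 : (β * t + 1) ^ Q = β ^ Q * t ^ Q + 1 := by
    rw [hfrob (β * t) 1, mul_pow, one_pow]
  rw [h1, hβq, htq]
  field_simp
  ring

private lemma cpp_L4 {Q d : ℕ} (hd : 0 < d) (hQ : 2 ≤ Q)
    (hrm : Q ^ 2 - 1 = (Q - 1) * (Q + 1))
    {β : F} (hβ0 : β ≠ 0) {ζ : Fˣ} (hζ : ∀ x : Fˣ, ∃ k : ℤ, ζ ^ k = x)
    (hord : orderOf ζ = Q ^ 2 - 1) (hcard : Nat.card Fˣ = Q ^ 2 - 1) :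
    (∃ x : Fˣ, β * (x : F) ^ (d * (Q - 1)) + 1 = 0) ↔
      (-β) ^ ((Q + 1) / Nat.gcd (Q + 1) d) = 1 := by
  set r := Q - 1 with hr
  set m := Q + 1 with hm
  set N := Q ^ 2 - 1 with hN
  set g := Nat.gcd m d with hg
  set k := m / g with hk
  have hgm : g ∣ m := Nat.gcd_dvd_left _ _
  have hgd : g ∣ d := Nat.gcd_dvd_right _ _
  have hgpos : 0 < g := Nat.gcd_pos_of_pos_left _ (by omega)
  have hgk : g * k = m := Nat.mul_div_cancel' hgm
  have hkpos : 0 < k := by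
    rcases Nat.eq_zero_or_pos k with h | h
    · rw [h, mul_zero] at hgk; omega
    · exact h
  have hrpos : 0 < r := by omega
  have hxN : ∀ x : Fˣ, x ^ N = 1 := fun x => by rw [← hcard]; exact pow_card_eq_one'
  have hdrk : ∀ x : Fˣ, (x : F) ^ (d * r * k) = 1 := by
    intro x
    have hdvd : N ∣ d * r * k := by
      obtain ⟨d', hd'⟩ := hgd
      refine ⟨d', ?_⟩
      rw [hrm, hd', ← hgk]; ring
    obtain ⟨c, hc⟩ := hdvd
    rw [hc, pow_mul, ← Units.val_pow_eq_pow_val, hxN, Units.val_one, one_pow]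
  constructor
  · rintro ⟨x, hx⟩
    have hx' : β * (x : F) ^ (d * r) = -1 := eq_neg_of_add_eq_zero_left hx
    have h1 : (β * (x : F) ^ (d * r)) ^ k = (-1 : F) ^ k := by rw [hx']
    rw [mul_pow, ← pow_mul, hdrk x, mul_one] at h1
    calc (-β) ^ k = (-1 : F) ^ k * β ^ k := by rw [← neg_one_mul, mul_pow]
      _ = (-1 : F) ^ k * (-1 : F) ^ k := by rw [h1]
      _ = ((-1 : F) * (-1)) ^ k := (mul_pow _ _ _).symm
      _ = 1 := by rw [neg_one_mul, neg_neg, one_pow]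
  · intro h1
    set Bu : Fˣ := Units.mk0 β hβ0 with hBu
    obtain ⟨a0, ha0⟩ := hζ (-Bu)
    have hnegval : ((-Bu : Fˣ) : F) = -β := by simp [hBu]
    have hBk : (-Bu) ^ k = 1 := Units.ext (by
      rw [Units.val_pow_eq_pow_val, hnegval, h1, Units.val_one])
    have h2 : (N : ℤ) ∣ a0 * k := by
      have hz : ζ ^ (a0 * (k : ℤ)) = 1 := by
        rw [zpow_mul, zpow_natCast, ha0, hBk]
      exact ((cpp_zpow hord _).mp hz)
    have hNrm' : ((N : ℕ) : ℤ) = ((r : ℕ) : ℤ) * ((m : ℕ) : ℤ) := by exact_mod_cast congrArg (Nat.cast (R := ℤ)) hrm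
    have h3 : ((r : ℤ) * g) ∣ a0 := by
      have hNz : ((N : ℕ) : ℤ) = ((r : ℤ) * g) * k := by
        rw [hNrm', ← hgk]; push_cast; ring
      rw [hNz] at h2
      exact (mul_dvd_mul_iff_right (by exact_mod_cast hkpos.ne' : (k : ℤ) ≠ 0)).mp h2
    obtain ⟨b0, hb0⟩ := h3
    have hbez : ((g : ℕ) : ℤ) = m * Int.gcdA m d + d * Int.gcdB m d := by
      have h := Int.gcd_eq_gcd_ab (m : ℤ) (d : ℤ)
      rwa [Int.gcd_natCast_natCast] at h
    set i : ℤ := -b0 * Int.gcdB m d with hi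
    refine ⟨ζ ^ i, ?_⟩
    have hsum : ζ ^ (i * ((d * r : ℕ) : ℤ) + a0) = 1 := by
      rw [cpp_zpow hord]
      refine ⟨b0 * Int.gcdA m d, ?_⟩
      rw [hNrm', hb0, hi, Nat.cast_mul]
      linear_combination ((r : ℤ) * b0) * hbez
    have hz1 : ζ ^ (i * ((d * r : ℕ) : ℤ)) * ζ ^ a0 = 1 := by
      rw [← zpow_add]; exact hsum
    have hz : (ζ ^ i) ^ (d * r : ℕ) = (-Bu)⁻¹ := by
      rw [← ha0]
      rw [← zpow_natCast (ζ ^ i) (d * r), ← zpow_mul]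
      exact eq_inv_of_mul_eq_one_left hz1
    have hval : ((ζ ^ i : Fˣ) : F) ^ (d * r) = (-β)⁻¹ := by
      rw [← Units.val_pow_eq_pow_val, hz, Units.val_inv_eq_inv_val, hnegval]
    rw [hval, inv_neg, mul_neg, mul_inv_cancel₀ hβ0, neg_add_cancel]


private lemma cpp_B {Q d : ℕ} (hd : 0 < d) (hQ : 2 ≤ Q)
    (hrm : Q ^ 2 - 1 = (Q - 1) * (Q + 1))
    (hfrob : ∀ a b : F, (a + b) ^ Q = a ^ Q + b ^ Q)
    {β : F} (hβ : β ^ (Q + 1) = 1) {ζ : Fˣ} (hζ : ∀ x : Fˣ, ∃ k : ℤ, ζ ^ k = x)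
    (hord : orderOf ζ = Q ^ 2 - 1) (hcard : Nat.card Fˣ = Q ^ 2 - 1) :
    Function.Bijective (fun x : F => β * x ^ (1 + d * (Q - 1)) + x) ↔
      (Nat.gcd (d - 1) (Q + 1) = 1 ∧ ∀ x : Fˣ, β * (x : F) ^ (d * (Q - 1)) + 1 ≠ 0) := by
  have hβ0 : β ≠ 0 := by rintro rfl; simp at hβ
  set r := Q - 1 with hr
  set m := Q + 1 with hm
  set N := Q ^ 2 - 1 with hN
  have hrpos : 0 < r := by omega
  have hNpos : 0 < N := by rw [hrm]; positivity
  have hQr : r + 1 = Q := by omega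
  have hxN : ∀ x : Fˣ, x ^ N = 1 := fun x => by rw [← hcard]; exact pow_card_eq_one'
  have hmu : ∀ x : Fˣ, ((x : F) ^ (d * r)) ^ (Q + 1) = 1 := by
    intro x
    have h1 : d * r * (Q + 1) = N * d := by rw [hrm]; ring
    rw [← pow_mul, h1, pow_mul, ← Units.val_pow_eq_pow_val, hxN, Units.val_one, one_pow]
  have hkey : ∀ x : Fˣ, (β * (x : F) ^ (d * r) + 1) ^ Q
      = β⁻¹ * ((x : F) ^ (d * r))⁻¹ * (β * (x : F) ^ (d * r) + 1) :=
    fun x => cpp_key hfrob hβ (hmu x)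
  have hexp : ∀ c : F, β * c ^ (1 + d * r) + c = c * (β * c ^ (d * r) + 1) := by
    intro c; ring
  constructor
  · -- bijective → conditions
    intro hbij
    have hii : ∀ x : Fˣ, β * (x : F) ^ (d * r) + 1 ≠ 0 := by
      intro x hx0
      have h1 : β * (x : F) ^ (1 + d * r) + (x : F) = β * (0 : F) ^ (1 + d * r) + 0 := by
        rw [hexp, hx0, mul_zero, zero_pow (by omega : 1 + d * r ≠ 0), mul_zero, add_zero]
      exact x.ne_zero (hbij.injective h1)
    refine ⟨?_, hii⟩
    by_contra hg
    set g := Nat.gcd (d - 1) m with hgdef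
    have hgm : g ∣ m := Nat.gcd_dvd_right _ _
    have hgd1 : g ∣ d - 1 := Nat.gcd_dvd_left _ _
    have hgpos : 0 < g := Nat.gcd_pos_of_pos_right _ (by omega)
    have hg2 : 2 ≤ g := by omega
    have hmg : 0 < m / g := Nat.div_pos (Nat.le_of_dvd (by omega) hgm) hgpos
    set X : Fˣ := ζ ^ ((m / g : ℕ) : ℤ) with hX
    have hc1 : β * (X : F) ^ (d * r) + 1 ≠ 0 := hii X
    have hc0 : β + 1 ≠ 0 := by simpa using hii 1
    have hXne : (X : F) ≠ 0 := X.ne_zero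
    set Bu : Fˣ := Units.mk0 β hβ0 with hBu
    set TX : Fˣ := Units.mk0 _ hc1 with hTX
    set C0 : Fˣ := Units.mk0 _ hc0 with hC0
    set Y : Fˣ := X * TX * C0⁻¹ with hY
    have hTXQ : TX ^ Q = Bu⁻¹ * (X ^ (d * r))⁻¹ * TX := by
      apply Units.ext
      simp only [Units.val_mul, Units.val_pow_eq_pow_val, Units.val_inv_eq_inv_val,
        Units.val_mk0]
      exact hkey X
    have hC0Q : C0 ^ Q = Bu⁻¹ * C0 := by
      apply Units.ext
      simp only [Units.val_mul, Units.val_pow_eq_pow_val, Units.val_inv_eq_inv_val,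
        Units.val_mk0]
      have h := cpp_key hfrob hβ (t := 1) (by simp)
      simpa [hC0, hBu] using h
    have hYQ : Y ^ Q = X ^ Q * (X ^ (d * r))⁻¹ * TX * C0⁻¹ := by
      calc Y ^ Q = X ^ Q * TX ^ Q * (C0 ^ Q)⁻¹ := by
            rw [hY, mul_pow, mul_pow, inv_pow]
        _ = X ^ Q * (Bu⁻¹ * (X ^ (d * r))⁻¹ * TX) * (Bu⁻¹ * C0)⁻¹ := by rw [hTXQ, hC0Q]
        _ = X ^ Q * (X ^ (d * r))⁻¹ * TX * C0⁻¹ := by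
            apply Units.ext
            simp only [Units.val_mul, Units.val_pow_eq_pow_val, Units.val_inv_eq_inv_val,
              Units.val_mul, Units.val_mk0]
            field_simp
    have hYr : Y ^ r = X ^ r * (X ^ (d * r))⁻¹ := by
      have h1 : Y ^ r * Y = (X ^ r * (X ^ (d * r))⁻¹) * Y := by
        rw [← pow_succ, hQr, hYQ]
        calc X ^ Q * (X ^ (d * r))⁻¹ * TX * C0⁻¹
            = (X ^ r * X) * (X ^ (d * r))⁻¹ * TX * C0⁻¹ := by rw [← pow_succ, hQr]
          _ = (X ^ r * (X ^ (d * r))⁻¹) * Y := by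
              rw [hY]
              apply Units.ext
              simp only [Units.val_mul, Units.val_pow_eq_pow_val, Units.val_inv_eq_inv_val,
                Units.val_mk0]
              field_simp
      exact mul_right_cancel h1
    have hYr1 : Y ^ r = 1 := by
      rw [hYr, hX]
      rw [← zpow_natCast (ζ ^ ((m / g : ℕ) : ℤ)) r, ← zpow_natCast (ζ ^ ((m / g : ℕ) : ℤ)) (d * r),
        ← zpow_mul, ← zpow_mul, ← zpow_neg, ← zpow_add, cpp_zpow hord]
      have hdvd : N ∣ (m / g) * r * (d - 1) := by
        obtain ⟨c, hc⟩ := hgd1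
        refine ⟨c, ?_⟩
        rw [hrm, hc]
        calc (m / g) * r * (g * c) = ((m / g) * g) * (r * c) := by ring
          _ = m * (r * c) := by rw [Nat.div_mul_cancel hgm]
          _ = r * m * c := by ring
      have heq : ((m / g : ℕ) : ℤ) * r + -(((m / g : ℕ) : ℤ) * ((d * r : ℕ) : ℤ))
          = -((((m / g) * r * (d - 1) : ℕ) : ℤ)) := by
        rw [Nat.cast_mul, Nat.cast_mul, Nat.cast_mul,
          (show ((d - 1 : ℕ) : ℤ) = (d : ℤ) - 1 by omega)]
        ring
      rw [heq]
      exact dvd_neg.mpr (Int.natCast_dvd_natCast.mpr hdvd)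
    have hXY : X ≠ Y := by
      intro hxy
      have h0 : X * 1 = X * (TX * C0⁻¹) := by rw [mul_one]; rw [hY] at hxy; rw [← mul_assoc, ← hxy]
      have h1 : TX * C0⁻¹ = 1 := (mul_left_cancel h0).symm
      have h2 : TX = C0 := by rwa [mul_inv_eq_one] at h1
      have h3 : β * (X : F) ^ (d * r) + 1 = β + 1 := by
        have := congrArg Units.val h2
        simpa [hTX, hC0] using this
      have h4 : (X : F) ^ (d * r) = 1 := by
        have h5 : β * (X : F) ^ (d * r) = β * 1 := by
          rw [mul_one]
          linear_combination h3
        exact mul_left_cancel₀ hβ0 h5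
      have h5 : X ^ (d * r) = 1 := Units.ext (by
        rw [Units.val_pow_eq_pow_val, h4, Units.val_one])
      rw [hX, ← zpow_natCast (ζ ^ ((m / g : ℕ) : ℤ)) (d * r), ← zpow_mul, cpp_zpow hord] at h5
      have h6 : N ∣ (m / g) * (d * r) := by exact_mod_cast h5
      have h7 : g ∣ d := by
        rw [hrm] at h6
        have h8 : r * m ∣ r * ((m / g) * d) := by
          obtain ⟨c, hc⟩ := h6
          refine ⟨c, ?_⟩
          calc r * ((m / g) * d) = (m / g) * (d * r) := by ring
            _ = r * m * c := hc
        have h9 : m ∣ (m / g) * d := Nat.dvd_of_mul_dvd_mul_left hrpos h8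
        have h9' : (m / g) * g ∣ (m / g) * d := by
          rw [Nat.div_mul_cancel hgm]; exact h9
        exact Nat.dvd_of_mul_dvd_mul_left hmg h9'
      have h10 : g ∣ 1 := by
        have h11 := Nat.dvd_sub h7 hgd1
        rwa [(show d - (d - 1) = 1 by omega)] at h11
      exact hg (Nat.dvd_one.mp h10)
    have hYdr : (Y : F) ^ (d * r) = 1 := by
      have h1 : Y ^ (d * r) = 1 := by rw [mul_comm d r, pow_mul, hYr1, one_pow]
      rw [← Units.val_pow_eq_pow_val, h1, Units.val_one]
    have hhXY : β * (X : F) ^ (1 + d * r) + (X : F) = β * (Y : F) ^ (1 + d * r) + (Y : F) := by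
      rw [hexp, hexp, hYdr, mul_one]
      have hYval : (Y : F) = (X : F) * (β * (X : F) ^ (d * r) + 1) * (β + 1)⁻¹ := by
        rw [hY]
        simp [hTX, hC0]
      rw [hYval]
      field_simp
    exact hXY (Units.ext (hbij.injective hhXY))
  · -- conditions → bijective
    rintro ⟨hcop, hii⟩
    rw [← Finite.injective_iff_bijective]
    intro a b hab
    simp only at hab
    rw [hexp a, hexp b] at hab
    rcases eq_or_ne a 0 with rfl | ha0
    · rw [zero_mul] at hab
      rcases eq_or_ne b 0 with rfl | hb0
      · rfl
      · exact absurd hab.symm (mul_ne_zero hb0 (hii (Units.mk0 b hb0)))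
    rcases eq_or_ne b 0 with rfl | hb0
    · rw [zero_mul] at hab
      exact absurd hab (mul_ne_zero ha0 (hii (Units.mk0 a ha0)))
    have hta0 : β * a ^ (d * r) + 1 ≠ 0 := hii (Units.mk0 a ha0)
    have htb0 : β * b ^ (d * r) + 1 ≠ 0 := hii (Units.mk0 b hb0)
    have ha' : a ^ (d * r) ≠ 0 := pow_ne_zero _ ha0
    have hb' : b ^ (d * r) ≠ 0 := pow_ne_zero _ hb0
    have hkA : (β * a ^ (d * r) + 1) ^ Q = β⁻¹ * (a ^ (d * r))⁻¹ * (β * a ^ (d * r) + 1) :=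
      hkey (Units.mk0 a ha0)
    have hkB : (β * b ^ (d * r) + 1) ^ Q = β⁻¹ * (b ^ (d * r))⁻¹ * (β * b ^ (d * r) + 1) :=
      hkey (Units.mk0 b hb0)
    have E1 : a * (β * a ^ (d * r) + 1) = b * (β * b ^ (d * r) + 1) := hab
    have E2 : a ^ Q * (β⁻¹ * (a ^ (d * r))⁻¹ * (β * a ^ (d * r) + 1))
        = b ^ Q * (β⁻¹ * (b ^ (d * r))⁻¹ * (β * b ^ (d * r) + 1)) := by
      have h := congrArg (fun z => z ^ Q) E1
      simp only [mul_pow] at h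
      rwa [hkA, hkB] at h
    have E3 : a ^ Q * b ^ (d * r) * (β * a ^ (d * r) + 1)
        = b ^ Q * a ^ (d * r) * (β * b ^ (d * r) + 1) := by
      field_simp at E2
      apply mul_left_cancel₀ hβ0
      linear_combination β * E2
    have E4 : a ^ Q * b ^ (d * r) * b * ((β * a ^ (d * r) + 1) * (β * b ^ (d * r) + 1))
        = b ^ Q * a ^ (d * r) * a * ((β * a ^ (d * r) + 1) * (β * b ^ (d * r) + 1)) := by
      linear_combination (b * (β * b ^ (d * r) + 1)) * E3
        - (b ^ Q * a ^ (d * r) * (β * b ^ (d * r) + 1)) * E1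
    have E5 : a ^ Q * b ^ (d * r) * b = b ^ Q * a ^ (d * r) * a :=
      mul_right_cancel₀ (mul_ne_zero hta0 htb0) E4
    obtain ⟨i, hi⟩ := hζ (Units.mk0 a ha0)
    obtain ⟨j, hj⟩ := hζ (Units.mk0 b hb0)
    have E6 : (Units.mk0 a ha0) ^ Q * (Units.mk0 b hb0) ^ (d * r) * (Units.mk0 b hb0)
        = (Units.mk0 b hb0) ^ Q * (Units.mk0 a ha0) ^ (d * r) * (Units.mk0 a ha0) :=
      Units.ext (by
        simp only [Units.val_mul, Units.val_pow_eq_pow_val, Units.val_mk0]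
        exact E5)
    rw [← hi, ← hj] at E6
    have E7 : ζ ^ (i * ((Q : ℕ) : ℤ) + j * ((d * r : ℕ) : ℤ) + j)
        = ζ ^ (j * ((Q : ℕ) : ℤ) + i * ((d * r : ℕ) : ℤ) + i) := by
      rw [zpow_add, zpow_add, zpow_add, zpow_add, zpow_mul, zpow_mul, zpow_mul, zpow_mul,
        zpow_natCast, zpow_natCast, zpow_natCast, zpow_natCast]
      exact E6
    have E8 : ζ ^ ((i * ((Q : ℕ) : ℤ) + j * ((d * r : ℕ) : ℤ) + j)
        - (j * ((Q : ℕ) : ℤ) + i * ((d * r : ℕ) : ℤ) + i)) = 1 := by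
      rw [zpow_sub, E7, mul_inv_cancel]
    rw [cpp_zpow hord] at E8
    have hQz : (Q : ℤ) = ((r : ℕ) : ℤ) + 1 := by omega
    have E9 : (N : ℤ) ∣ (i - j) * (((r : ℕ) : ℤ) * ((d : ℤ) - 1)) := by
      have heq : (i * ((Q : ℕ) : ℤ) + j * ((d * r : ℕ) : ℤ) + j)
          - (j * ((Q : ℕ) : ℤ) + i * ((d * r : ℕ) : ℤ) + i)
          = -((i - j) * (((r : ℕ) : ℤ) * ((d : ℤ) - 1))) := by
        rw [Nat.cast_mul]
        linear_combination (i - j) * hQz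
      rw [heq] at E8
      exact (dvd_neg.mp E8)
    have hNrm' : ((N : ℕ) : ℤ) = ((r : ℕ) : ℤ) * ((m : ℕ) : ℤ) := by
      exact_mod_cast congrArg (Nat.cast (R := ℤ)) hrm
    have E10 : ((m : ℕ) : ℤ) ∣ (i - j) * ((d : ℤ) - 1) := by
      have h2 : ((r : ℕ) : ℤ) * ((m : ℕ) : ℤ) ∣ ((r : ℕ) : ℤ) * ((i - j) * ((d : ℤ) - 1)) := by
        have heq : (i - j) * (((r : ℕ) : ℤ) * ((d : ℤ) - 1))
            = ((r : ℕ) : ℤ) * ((i - j) * ((d : ℤ) - 1)) := by ring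
        rw [heq] at E9
        rwa [hNrm'] at E9
      exact (mul_dvd_mul_iff_left (by exact_mod_cast hrpos.ne' : ((r : ℕ) : ℤ) ≠ 0)).mp h2
    have hic : IsCoprime ((m : ℕ) : ℤ) ((d : ℤ) - 1) := by
      rw [(show ((d : ℤ) - 1) = ((d - 1 : ℕ) : ℤ) by omega),
        Int.isCoprime_iff_gcd_eq_one, Int.gcd_natCast_natCast]
      exact Nat.coprime_comm.mp hcop
    have E11 : ((m : ℕ) : ℤ) ∣ i - j := hic.dvd_of_dvd_mul_right E10
    have E12 : ζ ^ ((i - j) * ((d * r : ℕ) : ℤ)) = 1 := by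
      rw [cpp_zpow hord]
      obtain ⟨c, hc⟩ := E11
      refine ⟨c * d, ?_⟩
      rw [hc, hNrm', Nat.cast_mul]
      ring
    have E13 : ζ ^ (i * ((d * r : ℕ) : ℤ)) = ζ ^ (j * ((d * r : ℕ) : ℤ)) := by
      calc ζ ^ (i * ((d * r : ℕ) : ℤ))
          = ζ ^ (j * ((d * r : ℕ) : ℤ)) * ζ ^ ((i - j) * ((d * r : ℕ) : ℤ)) := by
            rw [← zpow_add]; congr 1; ring
        _ = ζ ^ (j * ((d * r : ℕ) : ℤ)) := by rw [E12, mul_one]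
    have E14 : a ^ (d * r) = b ^ (d * r) := by
      have h1 : (Units.mk0 a ha0) ^ (d * r) = (Units.mk0 b hb0) ^ (d * r) := by
        rw [← hi, ← hj, ← zpow_natCast (ζ ^ i) (d * r), ← zpow_natCast (ζ ^ j) (d * r),
          ← zpow_mul, ← zpow_mul]
        exact E13
      have h2 := congrArg Units.val h1
      simpa [Units.val_pow_eq_pow_val] using h2
    have E15 : a * (β * b ^ (d * r) + 1) = b * (β * b ^ (d * r) + 1) := by rw [← E14] at htb0 ⊢; rw [E14] at E1 ⊢; exact E1
    exact mul_right_cancel₀ htb0 E15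


private lemma cpp_A {Q d : ℕ} (hd : 0 < d) (hQ : 2 ≤ Q)
    (hrm : Q ^ 2 - 1 = (Q - 1) * (Q + 1))
    {β : F} (hβ0 : β ≠ 0) {ζ : Fˣ} (hζ : ∀ x : Fˣ, ∃ k : ℤ, ζ ^ k = x)
    (hord : orderOf ζ = Q ^ 2 - 1) :
    Function.Bijective (fun x : F => β * x ^ (1 + d * (Q - 1))) ↔
      Nat.gcd (2 * d - 1) (Q + 1) = 1 := by
  set r := Q - 1 with hr
  set m := Q + 1 with hm
  set N := Q ^ 2 - 1 with hN
  set e := 1 + d * r with he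
  have hrpos : 0 < r := by omega
  have hNpos : 0 < N := by rw [hrm]; positivity
  have hedm : e + (2 * d - 1) = d * m := by
    have h1 : d * m = d * r + 2 * d := by
      have h2 : m = r + 2 := by omega
      rw [h2]; ring
    omega
  constructor
  · -- bijective → gcd = 1
    intro hbij
    by_contra hg
    set g := Nat.gcd (2 * d - 1) m with hgdef
    have hgm : g ∣ m := Nat.gcd_dvd_right _ _
    have hgpos : 0 < g := Nat.gcd_pos_of_pos_right _ (by omega)
    have hg2 : 2 ≤ g := by omega
    have hgN : g ∣ N := hgm.trans (by rw [hrm]; exact dvd_mul_left _ _)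
    have hge : g ∣ e := by
      have h1 : g ∣ d * m := hgm.mul_left d
      have h2 : g ∣ 2 * d - 1 := Nat.gcd_dvd_left _ _
      have h3 : e = d * m - (2 * d - 1) := by omega
      rw [h3]; exact Nat.dvd_sub h1 h2
    set x : Fˣ := ζ ^ ((N / g : ℕ) : ℤ) with hx
    have hx1 : x ≠ 1 := by
      rw [hx, Ne, cpp_zpow hord]
      intro hdvd
      have h0 : 0 < N / g := Nat.div_pos (Nat.le_of_dvd hNpos hgN) hgpos
      have h1 : (N : ℤ) ≤ (N / g : ℕ) := Int.le_of_dvd (by exact_mod_cast h0) hdvd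
      have h2 : N / g < N := Nat.div_lt_self hNpos hg2
      omega
    have hxe' : x ^ e = 1 := by
      have hdvd : N ∣ (N / g) * e := by
        conv_lhs => rw [← Nat.div_mul_cancel hgN]
        exact Nat.mul_dvd_mul_left _ hge
      rw [hx, ← zpow_natCast (ζ ^ _) e, ← zpow_mul, cpp_zpow hord]
      exact_mod_cast hdvd
    have hxe : (x : F) ^ e = 1 := by
      rw [← Units.val_pow_eq_pow_val, hxe', Units.val_one]
    have heq : (x : F) = 1 := by
      apply hbij.injective
      show β * (x : F) ^ e = β * (1 : F) ^ e
      rw [hxe, one_pow]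
    exact hx1 (Units.ext (by simp [heq]))
  · -- gcd = 1 → bijective
    intro hg
    rw [← Finite.injective_iff_bijective]
    have cop1 : Nat.Coprime e r := by
      have := Nat.gcd_add_mul_right_left 1 r d
      simpa [Nat.Coprime, he] using this
    have cop2 : Nat.Coprime e m := by
      set g := Nat.gcd e m with hgdef
      have hge : g ∣ e := Nat.gcd_dvd_left _ _
      have h1 : g ∣ 2 * d - 1 := by
        have hgm : g ∣ d * m := (Nat.gcd_dvd_right e m).mul_left d
        have h : g ∣ e + (2 * d - 1) := by rw [hedm]; exact hgm
        exact (Nat.dvd_add_right hge).mp h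
      have h2 : g ∣ Nat.gcd (2 * d - 1) m := Nat.dvd_gcd h1 (Nat.gcd_dvd_right _ _)
      rw [hg] at h2
      exact Nat.dvd_one.mp h2
    have cop : Nat.Coprime e N := by
      rw [hrm]; exact Nat.Coprime.mul_right cop1 cop2
    have he0 : e ≠ 0 := by omega
    intro a b hab
    simp only at hab
    have hab' : a ^ e = b ^ e := mul_left_cancel₀ hβ0 hab
    rcases eq_or_ne a 0 with rfl | ha0
    · rw [zero_pow he0] at hab'
      exact ((pow_eq_zero_iff he0).mp hab'.symm).symm
    rcases eq_or_ne b 0 with rfl | hb0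
    · rw [zero_pow he0] at hab'
      exact absurd ((pow_eq_zero_iff he0).mp hab') ha0
    · set A : Fˣ := Units.mk0 a ha0 with hA
      set B : Fˣ := Units.mk0 b hb0 with hB
      obtain ⟨i, hi⟩ := hζ A
      obtain ⟨j, hj⟩ := hζ B
      have hAB : A ^ e = B ^ e := Units.ext (by
        simp only [Units.val_pow_eq_pow_val]
        exact hab')
      have h1 : ζ ^ (i * e) = ζ ^ (j * e) := by
        rw [zpow_mul, zpow_mul, zpow_natCast, zpow_natCast, hi, hj]; exact hAB
      have h2 : ζ ^ ((i - j) * e) = 1 := by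
        have : (i - j) * (e : ℤ) = i * e - j * e := by ring
        rw [this, zpow_sub, h1, mul_inv_cancel]
      rw [cpp_zpow hord] at h2
      have hic : IsCoprime (N : ℤ) (e : ℤ) := by
        rw [Int.isCoprime_iff_gcd_eq_one, Int.gcd_natCast_natCast]
        exact Nat.coprime_comm.mp cop
      have h4 : (N : ℤ) ∣ i - j := hic.dvd_of_dvd_mul_right h2
      have h5 : ζ ^ (i - j) = 1 := (cpp_zpow hord _).mpr h4
      have hABeq : A = B := by
        rw [← hi, ← hj]
        have : ζ ^ i = ζ ^ j * ζ ^ (i - j) := by rw [← zpow_add]; congr 1; ring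
        rw [this, h5, mul_one]
      exact congrArg Units.val hABeq

end CPP

theorem stmt_19 (Q d : ℕ) (hd : 0 < d)
    (F : Type*) [Field F] [Fintype F] (hF : Fintype.card F = Q ^ 2)
    (β : F) (hβ : β ^ (Q + 1) = 1) :
    (Function.Bijective (fun x : F => β * x ^ (1 + d * (Q - 1))) ∧
      Function.Bijective (fun x : F => β * x ^ (1 + d * (Q - 1)) + x)) ↔
      (Nat.gcd ((d - 1) * (2 * d - 1)) (Q + 1) = 1 ∧
        (-β) ^ ((Q + 1) / Nat.gcd (Q + 1) d) ≠ 1) := by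
  have hQ : 2 ≤ Q := by
    have h1 : 1 < Fintype.card F := Fintype.one_lt_card
    rw [hF] at h1
    by_contra h
    interval_cases Q <;> simp_all
  have hrm : Q ^ 2 - 1 = (Q - 1) * (Q + 1) := by
    obtain ⟨s, rfl⟩ : ∃ s, Q = s + 2 := ⟨Q - 2, by omega⟩
    have h2 : (s + 2) ^ 2 = (s + 1) * (s + 3) + 1 := by ring
    have h3 : (s + 2 - 1) * (s + 2 + 1) = (s + 1) * (s + 3) := by
      rw [show s + 2 - 1 = s + 1 from by omega, show s + 2 + 1 = s + 3 from by omega]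
    omega
  have hβ0 : β ≠ 0 := by
    rintro rfl; simp at hβ
  have hfrob := cpp_frob hF
  obtain ⟨ζ, hζmem⟩ := IsCyclic.exists_generator (α := Fˣ)
  have hcard : Nat.card Fˣ = Q ^ 2 - 1 := by
    rw [Nat.card_units, Nat.card_eq_fintype_card, hF]
  have hord : orderOf ζ = Q ^ 2 - 1 := by
    rw [orderOf_eq_card_of_forall_mem_zpowers hζmem, hcard]
  have hζ : ∀ x : Fˣ, ∃ k : ℤ, ζ ^ k = x := fun x => Subgroup.mem_zpowers_iff.mp (hζmem x)
  rw [cpp_A hd hQ hrm hβ0 hζ hord, cpp_B hd hQ hrm hfrob hβ hζ hord hcard]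
  constructor
  · rintro ⟨h2d, hd1, hii⟩
    refine ⟨Nat.coprime_mul_iff_left.mpr ⟨hd1, h2d⟩, ?_⟩
    intro hEq
    obtain ⟨x, hx⟩ := (cpp_L4 hd hQ hrm hβ0 hζ hord hcard).mpr hEq
    exact hii x hx
  · rintro ⟨hcop, hne⟩
    have h2 := Nat.coprime_mul_iff_left.mp hcop
    refine ⟨h2.2, h2.1, ?_⟩
    intro x hx
    exact hne ((cpp_L4 hd hQ hrm hβ0 hζ hord hcard).mp ⟨x, hx⟩)
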